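/- For all integers n ≥ 2, ∑_{i=1}^{n−1} ( 2(n−i)/((n−1)·i·(i+1)) )² = 4·( (2n⁴ + 2n³ + n²)·H_{n−1,2} − 3n⁴ − 2n³ + 2n² + 2n + 1 ) / (n²(n−1)²), and this quantity converges, as n → ∞, to 4π²/3 − 12. -/

import Mathlib

open Filter

lemma aux_sum (x : ℝ) (N : ℕ) :
    ∑ i ∈ Finset.Icc 1 N, (x - (i:ℝ))^2 / ((i:ℝ)^2 * ((i:ℝ)+1)^2)
    = x^2*(2*(∑ k ∈ Finset.Icc 1 N, 1/(k:ℝ)^2) - 3 + 2/((N:ℝ)+1) + 1/((N:ℝ)+1)^2)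
      - 2*x*(2 - 1/((N:ℝ)+1) - (∑ k ∈ Finset.Icc 1 N, 1/(k:ℝ)^2) - 1/((N:ℝ)+1)^2)
      + ((∑ k ∈ Finset.Icc 1 N, 1/(k:ℝ)^2) + 1/((N:ℝ)+1)^2 - 1) := by
  induction N with
  | zero => norm_num
  | succ N ih =>
    rw [Finset.sum_Icc_succ_top (by omega : 1 ≤ N+1),
        Finset.sum_Icc_succ_top (by omega : 1 ≤ N+1), ih]
    have h1 : ((N:ℝ)+1) ≠ 0 := by positivity
    have h2 : ((N:ℝ)+2) ≠ 0 := by positivity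
    push_cast
    field_simp
    ring

lemma closed_form (n : ℕ) (hn : 2 ≤ n) :
    ∑ i ∈ Finset.Icc 1 (n - 1),
        (2 * ((n : ℝ) - i) / (((n : ℝ) - 1) * i * ((i : ℝ) + 1))) ^ 2 =
      4 * ((2 * (n : ℝ) ^ 4 + 2 * (n : ℝ) ^ 3 + (n : ℝ) ^ 2) *
          (∑ k ∈ Finset.Icc 1 (n - 1), 1 / (k : ℝ) ^ 2) -
        3 * (n : ℝ) ^ 4 - 2 * (n : ℝ) ^ 3 + 2 * (n : ℝ) ^ 2 + 2 * (n : ℝ) + 1) /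
        ((n : ℝ) ^ 2 * ((n : ℝ) - 1) ^ 2) := by
  have hn0 : (n:ℝ) ≠ 0 := by positivity
  have hn1 : (n:ℝ) - 1 ≠ 0 := by
    have : (2:ℝ) ≤ n := by exact_mod_cast hn
    linarith
  have hcast : ((n-1 : ℕ) : ℝ) = (n:ℝ) - 1 := by
    rw [Nat.cast_sub (by omega)]; norm_num
  have step1 : ∑ i ∈ Finset.Icc 1 (n - 1),
        (2 * ((n : ℝ) - i) / (((n : ℝ) - 1) * i * ((i : ℝ) + 1))) ^ 2
      = 4/((n:ℝ)-1)^2 * ∑ i ∈ Finset.Icc 1 (n-1),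
          ((n:ℝ) - (i:ℝ))^2 / ((i:ℝ)^2 * ((i:ℝ)+1)^2) := by
    rw [Finset.mul_sum]
    refine Finset.sum_congr rfl fun i hi => ?_
    have hi1 : 1 ≤ i := (Finset.mem_Icc.mp hi).1
    have hi0 : (i:ℝ) ≠ 0 := by positivity
    have hi2 : (i:ℝ) + 1 ≠ 0 := by positivity
    field_simp
    ring
  rw [step1, aux_sum, hcast]
  have h : (n:ℝ) - 1 + 1 = (n:ℝ) := by ring
  rw [h]
  field_simp
  ring

theorem stmt9 :
    (∀ n : ℕ, 2 ≤ n →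
      ∑ i ∈ Finset.Icc 1 (n - 1),
          (2 * ((n : ℝ) - i) / (((n : ℝ) - 1) * i * ((i : ℝ) + 1))) ^ 2 =
        4 * ((2 * (n : ℝ) ^ 4 + 2 * (n : ℝ) ^ 3 + (n : ℝ) ^ 2) *
            (∑ k ∈ Finset.Icc 1 (n - 1), 1 / (k : ℝ) ^ 2) -
          3 * (n : ℝ) ^ 4 - 2 * (n : ℝ) ^ 3 + 2 * (n : ℝ) ^ 2 + 2 * (n : ℝ) + 1) /
          ((n : ℝ) ^ 2 * ((n : ℝ) - 1) ^ 2)) ∧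
    Tendsto (fun n : ℕ =>
        ∑ i ∈ Finset.Icc 1 (n - 1),
          (2 * ((n : ℝ) - i) / (((n : ℝ) - 1) * i * ((i : ℝ) + 1))) ^ 2)
      atTop (nhds (4 * Real.pi ^ 2 / 3 - 12)) := by
  refine ⟨closed_form, ?_⟩
  -- partial sums of 1/k^2 tend to π²/6
  have hH : Tendsto (fun n : ℕ => ∑ k ∈ Finset.Icc 1 (n-1), 1/(k:ℝ)^2) atTop
      (nhds (Real.pi ^ 2 / 6)) := by
    have h := hasSum_zeta_two.tendsto_sum_nat
    refine h.congr fun n => ?_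
    rcases n with _ | m
    · simp
    · rw [Finset.range_eq_Ico]
      have he : Finset.Ico 0 (m+1) = insert 0 (Finset.Icc 1 m) := by
        ext x; simp [Nat.lt_succ_iff]; omega
      rw [he, Finset.sum_insert (by simp)]
      norm_num
  have ht : Tendsto (fun n : ℕ => 1/(n:ℝ)) atTop (nhds 0) :=
    tendsto_one_div_atTop_nhds_zero_nat
  set F : ℝ × ℝ → ℝ := fun p =>
    4*((2+2*p.1+p.1^2)*p.2 - 3 - 2*p.1 + 2*p.1^2 + 2*p.1^3 + p.1^4)/((1-p.1)^2) with hF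
  have hc : ContinuousAt F (0, Real.pi^2/6) := by
    apply ContinuousAt.div
    · fun_prop
    · fun_prop
    · norm_num
  have hcomp : Tendsto (fun n : ℕ => F (1/(n:ℝ), ∑ k ∈ Finset.Icc 1 (n-1), 1/(k:ℝ)^2))
      atTop (nhds (F (0, Real.pi^2/6))) :=
    hc.tendsto.comp (ht.prodMk_nhds hH)
  have hval : F (0, Real.pi^2/6) = 4 * Real.pi ^ 2 / 3 - 12 := by
    simp only [hF]; ring
  rw [hval] at hcomp
  refine hcomp.congr' ?_
  filter_upwards [eventually_ge_atTop 2] with n hn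
  have hn0 : (n:ℝ) ≠ 0 := by positivity
  have hn1 : (n:ℝ) - 1 ≠ 0 := by
    have : (2:ℝ) ≤ n := by exact_mod_cast hn
    linarith
  rw [closed_form n hn]
  simp only [hF]
  field_simp
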